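/- Let M be a number field that is Galois over ℚ with Galois group isomorphic to (ℤ/2ℤ)². For each totally real quadratic subfield K of M let ε_K be a fundamental unit of K, i.e. a unit of O_K such that ε_K together with −1 generates O_K^×. Let 𝕌* ⊆ O_M^× be the subgroup generated by the roots of unity of M together with all the ε_K. Then 𝕌* has finite index in O_M^×, and this index divides 8. -/

import Mathlib

/-!
Statement 11: the subgroup of units of a biquadratic field generated by the roots of unity
together with the fundamental units of its real quadratic subfields has finite index
dividing 8 (parts (b),(c) of the proposition in §8.2.2).
-/

open NumberField

lemma aux_index_dvd {G : Type*} [CommGroup G] (H T : Subgroup G)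
    (hsq : ∀ g : G, g * g ∈ H) (hT : T ≤ H) (r : ℕ)
    (b : Module.Basis (Fin r) ℤ (Additive (G ⧸ T))) :
    H.index ≠ 0 ∧ H.index ∣ 2 ^ r := by
  classical
  set Q := G ⧸ H
  have hsq' : ∀ q : Q, q * q = 1 := by
    intro q
    induction q using QuotientGroup.induction_on with
    | H g => rw [← QuotientGroup.mk_mul, QuotientGroup.eq_one_iff]; exact hsq g
  letI : Module (ZMod 2) (Additive Q) := AddCommGroup.zmodModule (by
    intro x
    show (2 : ℕ) • x = 0
    rw [two_nsmul]
    exact hsq' x.toMul)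
  let φ : G ⧸ T →* Q := QuotientGroup.map T H (MonoidHom.id G) hT
  have hφ : Function.Surjective φ := by
    intro q
    induction q using QuotientGroup.induction_on with
    | H g => exact ⟨QuotientGroup.mk g, rfl⟩
  let φ' : Additive (G ⧸ T) →+ Additive Q := MonoidHom.toAdditive φ
  have hφ' : Function.Surjective φ' := hφ
  set q : Fin r → Additive Q := fun i => φ' (b i) with hq
  have hspanZ : Submodule.span ℤ (Set.range q) = ⊤ := by
    have h1 : Submodule.span ℤ (Set.range (⇑b)) = ⊤ := b.span_eq
    have h2 : Submodule.map φ'.toIntLinearMap (Submodule.span ℤ (Set.range (⇑b)))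
        = Submodule.span ℤ (Set.range q) := by
      rw [Submodule.map_span]
      congr 1
      rw [← Set.range_comp]
      rfl
    rw [h1, Submodule.map_top] at h2
    rw [← h2, LinearMap.range_eq_top]
    exact hφ'
  have hspan : Submodule.span (ZMod 2) (Set.range q) = ⊤ := by
    rw [Submodule.eq_top_iff']
    intro x
    have hx : x ∈ Submodule.span ℤ (Set.range q) := hspanZ ▸ Submodule.mem_top
    have hle : Submodule.span ℤ (Set.range q) ≤
        (Submodule.span (ZMod 2) (Set.range q)).toAddSubgroup.toIntSubmodule := by
      rw [Submodule.span_le]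
      exact Submodule.subset_span
    exact hle hx
  let g : (Fin r → ZMod 2) →+ Additive Q :=
    { toFun := fun c => ∑ i, c i • q i
      map_zero' := by simp
      map_add' := by intro a b; simp [add_smul, Finset.sum_add_distrib] }
  have hg : Function.Surjective g := by
    intro y
    have : y ∈ Submodule.span (ZMod 2) (Set.range q) := hspan ▸ Submodule.mem_top
    rw [Submodule.mem_span_range_iff_exists_fun] at this
    obtain ⟨c, hc⟩ := this
    exact ⟨c, hc⟩
  have hfin : Finite (Additive Q) := Finite.of_surjective g hg
  have hfinQ : Finite Q := hfin
  have hcard : Nat.card (Additive Q) ∣ 2 ^ r := by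
    have := AddSubgroup.card_dvd_of_surjective g hg
    simpa [Nat.card_eq_fintype_card, Fintype.card_fun] using this
  have hQA : Nat.card Q = Nat.card (Additive Q) := Nat.card_congr Additive.ofMul
  have hidx : H.index = Nat.card Q := rfl
  refine ⟨?_, ?_⟩
  · rw [hidx]
    exact Nat.card_pos.ne'
  · rw [hidx, hQA]; exact hcard

lemma aux_rank_zero_torsion {K : Type*} [Field K] [NumberField K]
    (h : NumberField.Units.rank K = 0) (w : (𝓞 K)ˣ) : ∃ n : ℕ, 0 < n ∧ w ^ n = 1 := by
  classical
  letI : Module ℤ (Additive ((𝓞 K)ˣ ⧸ NumberField.Units.torsion K)) :=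
    AddCommGroup.toIntModule (Additive ((𝓞 K)ˣ ⧸ NumberField.Units.torsion K))
  haveI : IsEmpty (Fin (NumberField.Units.rank K)) := by rw [h]; infer_instance
  letI := Finsupp.uniqueOfLeft (α := Fin (NumberField.Units.rank K)) (R := ℤ)
  have hsub : ∀ x : Additive ((𝓞 K)ˣ ⧸ NumberField.Units.torsion K), x = 0 := by
    intro x
    have := (NumberField.Units.basisModTorsion K).repr.injective
      (a₁ := x) (a₂ := 0) (Subsingleton.elim _ _)
    exact this
  have hw : (QuotientGroup.mk w : (𝓞 K)ˣ ⧸ NumberField.Units.torsion K) = 1 := by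
    have := hsub (Additive.ofMul (QuotientGroup.mk w))
    exact this
  rw [QuotientGroup.eq_one_iff] at hw
  rw [NumberField.Units.torsion, CommGroup.mem_torsion, isOfFinOrder_iff_pow_eq_one] at hw
  exact hw

lemma aux_rank_zero {K : Type*} [Field K] [NumberField K]
    (h2 : Module.finrank ℚ K = 2) (hre : ¬ Nonempty (K →+* ℝ)) :
    NumberField.Units.rank K = 0 := by
  classical
  have hr0 : NumberField.InfinitePlace.nrRealPlaces K = 0 := by
    rw [NumberField.InfinitePlace.nrRealPlaces, Fintype.card_eq_zero_iff]
    refine ⟨fun ⟨w, hw⟩ => hre ⟨NumberField.InfinitePlace.embedding_of_isReal hw⟩⟩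
  have hrel := NumberField.InfinitePlace.card_add_two_mul_card_eq_rank K
  rw [h2, hr0] at hrel
  have hc := NumberField.InfinitePlace.card_eq_nrRealPlaces_add_nrComplexPlaces K
  rw [NumberField.Units.rank, hc, hr0]
  omega

lemma aux_unit_in_imag {M : Type*} [Field M] [NumberField M]
    (K : IntermediateField ℚ M) (h2 : Module.finrank ℚ K = 2)
    (hre : ¬ Nonempty (K →+* ℝ)) (v : (𝓞 M)ˣ)
    (hv : algebraMap (𝓞 M) M (v : 𝓞 M) ∈ K) : ∃ n : ℕ, 0 < n ∧ v ^ n = 1 := by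
  classical
  have hrank : NumberField.Units.rank K = 0 := aux_rank_zero h2 hre
  set x : M := algebraMap (𝓞 M) M (v : 𝓞 M) with hxdef
  set x' : M := algebraMap (𝓞 M) M ((v⁻¹ : (𝓞 M)ˣ) : 𝓞 M) with hx'def
  have hxx' : x * x' = 1 := by
    rw [hxdef, hx'def, ← map_mul]
    norm_num
  have hx'K : x' ∈ K := by
    have : x' = x⁻¹ := eq_inv_of_mul_eq_one_right (mul_comm x x' ▸ hxx')
    rw [this]
    exact inv_mem hv
  have hinj : Function.Injective (algebraMap K M) := (algebraMap (↥K) M).injective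
  have hxint : IsIntegral ℤ (⟨x, hv⟩ : K) := by
    rw [← isIntegral_algebraMap_iff hinj]
    exact RingOfIntegers.isIntegral_coe _
  have hx'int : IsIntegral ℤ (⟨x', hx'K⟩ : K) := by
    rw [← isIntegral_algebraMap_iff hinj]
    exact RingOfIntegers.isIntegral_coe _
  set y : 𝓞 K := ⟨⟨x, hv⟩, hxint⟩ with hydef
  set y' : 𝓞 K := ⟨⟨x', hx'K⟩, hx'int⟩ with hy'def
  have hyy' : y * y' = 1 := by
    apply RingOfIntegers.coe_injective (K := K)
    push_cast [map_mul]
    show (⟨x, hv⟩ : K) * ⟨x', hx'K⟩ = 1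
    ext
    push_cast
    exact hxx'
  have hy'y : y' * y = 1 := by rw [mul_comm]; exact hyy'
  set w : (𝓞 K)ˣ := ⟨y, y', hyy', hy'y⟩ with hwdef
  obtain ⟨n, hn, hwn⟩ := aux_rank_zero_torsion hrank w
  refine ⟨n, hn, ?_⟩
  have hyn : y ^ n = 1 := by
    have := congrArg (Units.val) hwn
    push_cast at this
    exact this
  have hxn : x ^ n = 1 := by
    have := congrArg (fun z : 𝓞 K => ((z : K) : M)) hyn
    push_cast at this
    exact this
  ext
  push_cast
  exact hxn

lemma aux_rat_value_torsion {M : Type*} [Field M] [NumberField M]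
    (N : (𝓞 M)ˣ) (q : ℚ) (hq : algebraMap ℚ M q = algebraMap (𝓞 M) M (N : 𝓞 M)) :
    N ^ 2 = 1 := by
  have hinj : Function.Injective (algebraMap ℚ M) := (algebraMap ℚ M).injective
  have hqint : IsIntegral ℤ q := by
    rw [← isIntegral_algebraMap_iff hinj, hq]
    exact RingOfIntegers.isIntegral_coe _
  have hN : algebraMap (𝓞 M) M ((N : 𝓞 M)) * algebraMap (𝓞 M) M ((N⁻¹ : (𝓞 M)ˣ) : 𝓞 M) = 1 := by
    rw [← map_mul]
    norm_num
  have hq0 : q ≠ 0 := by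
    intro h0
    rw [h0, map_zero] at hq
    rw [← hq, zero_mul] at hN
    exact zero_ne_one hN
  have hqinv : IsIntegral ℤ q⁻¹ := by
    rw [← isIntegral_algebraMap_iff hinj]
    have h1 : algebraMap ℚ M q⁻¹ = algebraMap (𝓞 M) M ((N⁻¹ : (𝓞 M)ˣ) : 𝓞 M) := by
      rw [map_inv₀, hq, inv_eq_of_mul_eq_one_right hN]
    rw [h1]
    exact RingOfIntegers.isIntegral_coe _
  obtain ⟨m, hm⟩ := IsIntegrallyClosed.isIntegral_iff.mp hqint
  obtain ⟨m', hm'⟩ := IsIntegrallyClosed.isIntegral_iff.mp hqinv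
  have hmm' : m * m' = 1 := by
    have h2 : algebraMap ℤ ℚ (m * m') = 1 := by
      rw [map_mul, hm, hm', mul_inv_cancel₀ hq0]
    rw [algebraMap_int_eq] at h2
    simp only [Int.coe_castRingHom] at h2
    exact_mod_cast h2
  have hm1 : m = 1 ∨ m = -1 := Int.isUnit_iff.mp (IsUnit.of_mul_eq_one m' hmm')
  have hq2 : q ^ 2 = 1 := by
    rcases hm1 with h | h <;> rw [← hm, h] <;> norm_num
  have hval : ((N : 𝓞 M) ^ 2) = 1 := by
    apply RingOfIntegers.coe_injective (K := M)
    rw [map_pow, map_one, ← hq, ← map_pow, hq2, map_one]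
  rw [Units.ext_iff, Units.val_pow_eq_pow_val, Units.val_one]
  exact hval

lemma aux_comm {G : Type*} [CommGroup G] (u s1 s2 s3 : G) :
    (u * u) * (u * s1 * s2 * s3) = (u * s1) * ((u * s2) * (u * s3)) := by
  simp only [mul_assoc, mul_comm, mul_left_comm]

lemma aux_mem_fixed {M : Type*} [Field M] [NumberField M] [IsGalois ℚ M] (τ : M ≃ₐ[ℚ] M)
    (hτ2 : τ * τ = 1) (x : M) (hx : τ x = x) :
    x ∈ IntermediateField.fixedField (Subgroup.zpowers τ) := by
  have key : ∀ k : ℤ, τ ^ k = 1 ∨ τ ^ k = τ := by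
    intro k
    have h2 : τ ^ (2 : ℤ) = 1 := by rw [zpow_two]; exact hτ2
    rcases Int.even_or_odd k with ⟨m, hm⟩ | ⟨m, hm⟩
    · left; rw [hm, ← two_mul, zpow_mul, h2, one_zpow]
    · right; rw [hm, zpow_add, zpow_one, zpow_mul, h2, one_zpow, one_mul]
  rw [IntermediateField.fixedField, FixedPoints.intermediateField]
  show ∀ g : Subgroup.zpowers τ, g • x = x
  rintro ⟨g, k, rfl⟩
  show (τ ^ k : M ≃ₐ[ℚ] M) • x = x
  rcases key k with h | h <;> rw [h]
  · exact one_smul _ x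
  · exact hx

lemma aux_finrank_fixed {M : Type*} [Field M] [NumberField M] [IsGalois ℚ M] (τ : M ≃ₐ[ℚ] M)
    (hτ : τ ≠ 1) (hτ2 : τ * τ = 1) (h4 : Module.finrank ℚ M = 4) :
    Module.finrank ℚ (IntermediateField.fixedField (Subgroup.zpowers τ)) = 2 := by
  classical
  have horder : orderOf τ = 2 := orderOf_eq_prime (by rw [pow_two]; exact hτ2) hτ
  have hcard : Fintype.card (Subgroup.zpowers τ) = 2 := by
    rw [← Nat.card_eq_fintype_card, Nat.card_zpowers, horder]
  have hKM : Module.finrank (IntermediateField.fixedField (Subgroup.zpowers τ)) M = 2 := by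
    rw [IntermediateField.finrank_fixedField_eq_card, Nat.card_eq_fintype_card, hcard]
  have htower := Module.finrank_mul_finrank ℚ (IntermediateField.fixedField (Subgroup.zpowers τ)) M
  rw [hKM, h4] at htower
  omega

lemma aux_rat_fixed {M : Type*} [Field M] [NumberField M] [IsGalois ℚ M] (x : M)
    (hx : ∀ τ : M ≃ₐ[ℚ] M, τ x = x) : ∃ q : ℚ, algebraMap ℚ M q = x := by
  have h1 : IntermediateField.fixingSubgroup (⊥ : IntermediateField ℚ M) = ⊤ := by
    ext g
    simp only [Subgroup.mem_top, iff_true]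
    rw [IntermediateField.fixingSubgroup, mem_fixingSubgroup_iff]
    rintro y hy
    rw [SetLike.mem_coe, IntermediateField.mem_bot] at hy
    obtain ⟨q, rfl⟩ := hy
    exact g.commutes q
  have h2 : IntermediateField.fixedField (⊤ : Subgroup (M ≃ₐ[ℚ] M)) = ⊥ := by
    rw [← h1, IsGalois.fixedField_fixingSubgroup]
  have h3 : x ∈ (⊥ : IntermediateField ℚ M) := by
    rw [← h2, IntermediateField.fixedField, FixedPoints.intermediateField]
    show ∀ g : (⊤ : Subgroup (M ≃ₐ[ℚ] M)), g • x = x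
    rintro ⟨g, -⟩
    exact hx g
  rwa [IntermediateField.mem_bot] at h3

theorem statement_11 (M : Type*) [Field M] [NumberField M] [IsGalois ℚ M]
    (hgal : Nonempty ((M ≃ₐ[ℚ] M) ≃* (Multiplicative (ZMod 2) × Multiplicative (ZMod 2))))
    (J : Set (IntermediateField ℚ M))
    (hJ : J = {K : IntermediateField ℚ M | Module.finrank ℚ K = 2 ∧ Nonempty (K →+* ℝ)})
    (ε : J → (𝓞 M)ˣ)
    (hmem : ∀ K : J, ((ε K : 𝓞 M) : M) ∈ (K : IntermediateField ℚ M))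
    -- `ε K` together with `−1` generates the group of units of `O_K`, identified with the
    -- units of `O_M` lying in `K`:
    (hfund : ∀ (K : J) (u : (𝓞 M)ˣ), ((u : 𝓞 M) : M) ∈ (K : IntermediateField ℚ M) →
      ∃ n : ℤ, u = (ε K) ^ n ∨ u = -((ε K) ^ n)) :
    (Subgroup.closure ({u : (𝓞 M)ˣ | ∃ n : ℕ, 1 ≤ n ∧ u ^ n = 1} ∪ Set.range ε)).index ≠ 0 ∧
    (Subgroup.closure ({u : (𝓞 M)ˣ | ∃ n : ℕ, 1 ≤ n ∧ u ^ n = 1} ∪ Set.range ε)).index ∣ 8 := by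
  classical
  obtain ⟨e⟩ := hgal
  set S : Set (𝓞 M)ˣ := {u : (𝓞 M)ˣ | ∃ n : ℕ, 1 ≤ n ∧ u ^ n = 1} ∪ Set.range ε with hSdef
  set H : Subgroup (𝓞 M)ˣ := Subgroup.closure S with hHdef
  have htorH : ∀ u : (𝓞 M)ˣ, (∃ n : ℕ, 0 < n ∧ u ^ n = 1) → u ∈ H := by
    rintro u ⟨n, hn, hu⟩
    exact Subgroup.subset_closure (Or.inl ⟨n, hn, hu⟩)
  have hεH : ∀ K : J, ε K ∈ H := fun K => Subgroup.subset_closure (Or.inr ⟨K, rfl⟩)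
  -- Galois action on units
  let ρ : (M ≃ₐ[ℚ] M) → ((𝓞 M)ˣ →* (𝓞 M)ˣ) := fun τ =>
    Units.map (galRestrict ℤ ℚ M (𝓞 M) τ).toAlgHom.toRingHom.toMonoidHom
  have hval : ∀ (τ : M ≃ₐ[ℚ] M) (u : (𝓞 M)ˣ),
      algebraMap (𝓞 M) M ((ρ τ u : 𝓞 M)) = τ (algebraMap (𝓞 M) M (u : 𝓞 M)) := by
    intro τ u
    show algebraMap (𝓞 M) M ((galRestrict ℤ ℚ M (𝓞 M) τ) (u : 𝓞 M)) = _
    exact algebraMap_galRestrict_apply ℤ τ (u : 𝓞 M)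
  -- finrank 4
  have hcard4 : Fintype.card (M ≃ₐ[ℚ] M) = 4 := by
    rw [Fintype.card_congr e.toEquiv]
    decide
  have hfr4 : Module.finrank ℚ M = 4 := by rw [← IsGalois.card_aut_eq_finrank, Nat.card_eq_fintype_card, hcard4]
  -- Klein four group elements
  set g1 : Multiplicative (ZMod 2) × Multiplicative (ZMod 2) :=
    (Multiplicative.ofAdd 1, Multiplicative.ofAdd 0) with hg1
  set g2 : Multiplicative (ZMod 2) × Multiplicative (ZMod 2) :=
    (Multiplicative.ofAdd 0, Multiplicative.ofAdd 1) with hg2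
  set g3 : Multiplicative (ZMod 2) × Multiplicative (ZMod 2) :=
    (Multiplicative.ofAdd 1, Multiplicative.ofAdd 1) with hg3
  have hA2 : ∀ a : Multiplicative (ZMod 2) × Multiplicative (ZMod 2), a * a = 1 := by decide
  have hall : ∀ b : Multiplicative (ZMod 2) × Multiplicative (ZMod 2),
      b = 1 ∨ b = g1 ∨ b = g2 ∨ b = g3 := by decide
  -- the units u * σ(u) lie in H
  have hvH : ∀ (a : Multiplicative (ZMod 2) × Multiplicative (ZMod 2)), a ≠ 1 →
      ∀ u : (𝓞 M)ˣ, u * ρ (e.symm a) u ∈ H := by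
    intro a ha u
    have hτ2 : e.symm a * e.symm a = 1 := by rw [← map_mul, hA2 a, map_one]
    have hτne : e.symm a ≠ 1 := by
      intro h
      exact ha (e.symm.injective (h.trans (map_one e.symm).symm))
    have hσσ : ∀ y : M, e.symm a (e.symm a y) = y := by
      intro y
      rw [← AlgEquiv.mul_apply, hτ2, AlgEquiv.one_apply]
    set v := u * ρ (e.symm a) u with hvdef
    set x : M := algebraMap (𝓞 M) M (u : 𝓞 M) with hxdef
    have hvval : algebraMap (𝓞 M) M (v : 𝓞 M) = x * e.symm a x := by
      rw [hvdef, Units.val_mul, map_mul, hval]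
    have hvmem : algebraMap (𝓞 M) M (v : 𝓞 M)
        ∈ IntermediateField.fixedField (Subgroup.zpowers (e.symm a)) := by
      apply aux_mem_fixed _ hτ2
      rw [hvval, map_mul, hσσ]
      ring
    set Ka := IntermediateField.fixedField (Subgroup.zpowers (e.symm a)) with hKa
    have hK2 : Module.finrank ℚ Ka = 2 := aux_finrank_fixed _ hτne hτ2 hfr4
    by_cases hKJ : Ka ∈ J
    · obtain ⟨n, hn⟩ := hfund ⟨Ka, hKJ⟩ v hvmem
      rcases hn with h | h
      · rw [h]
        exact Subgroup.zpow_mem H (hεH ⟨Ka, hKJ⟩) n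
      · rw [h]
        have hneg1 : (-1 : (𝓞 M)ˣ) ∈ H := htorH _ ⟨2, by norm_num, by norm_num⟩
        rw [show -((ε ⟨Ka, hKJ⟩) ^ n) = (-1) * (ε ⟨Ka, hKJ⟩) ^ n from (neg_one_mul _).symm]
        exact Subgroup.mul_mem H hneg1 (Subgroup.zpow_mem H (hεH ⟨Ka, hKJ⟩) n)
    · have hre : ¬ Nonempty (Ka →+* ℝ) := by
        intro hne
        exact hKJ (by rw [hJ]; exact ⟨hK2, hne⟩)
      exact htorH v (aux_unit_in_imag Ka hK2 hre v hvmem)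
  -- squares are in H
  have hsq : ∀ u : (𝓞 M)ˣ, u * u ∈ H := by
    intro u
    set x : M := algebraMap (𝓞 M) M (u : 𝓞 M) with hxdef
    set F : Multiplicative (ZMod 2) × Multiplicative (ZMod 2) → M :=
      fun a => e.symm a x with hFdef
    have hcomp : ∀ (a b : Multiplicative (ZMod 2) × Multiplicative (ZMod 2)) (y : M),
        e.symm a (e.symm b y) = e.symm (a * b) y := by
      intro a b y
      rw [map_mul, AlgEquiv.mul_apply]
    have hF : ∀ a b : Multiplicative (ZMod 2) × Multiplicative (ZMod 2),
        e.symm b (F a) = F (b * a) := fun a b => hcomp b a x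
    have key : ∀ b : Multiplicative (ZMod 2) × Multiplicative (ZMod 2),
        e.symm b (F 1 * F g1 * F g2 * F g3) = F 1 * F g1 * F g2 * F g3 := by
      intro b
      rw [map_mul, map_mul, map_mul, hF, hF, hF, hF]
      rcases hall b with rfl | rfl | rfl | rfl
      · rw [one_mul, one_mul, one_mul, one_mul]
      · rw [show g1 * 1 = g1 from by decide, show g1 * g1 = 1 from by decide,
          show g1 * g2 = g3 from by decide, show g1 * g3 = g2 from by decide]
        ring
      · rw [show g2 * 1 = g2 from by decide, show g2 * g1 = g3 from by decide,
          show g2 * g2 = 1 from by decide, show g2 * g3 = g1 from by decide]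
        ring
      · rw [show g3 * 1 = g3 from by decide, show g3 * g1 = g2 from by decide,
          show g3 * g2 = g1 from by decide, show g3 * g3 = 1 from by decide]
        ring
    have hfixall : ∀ τ : M ≃ₐ[ℚ] M, τ (F 1 * F g1 * F g2 * F g3) = F 1 * F g1 * F g2 * F g3 := by
      intro τ
      have hτ : τ = e.symm (e τ) := (e.symm_apply_apply τ).symm
      rw [hτ]
      exact key (e τ)
    obtain ⟨q, hq⟩ := aux_rat_fixed _ hfixall
    set s1 : (𝓞 M)ˣ := ρ (e.symm g1) u with hs1
    set s2 : (𝓞 M)ˣ := ρ (e.symm g2) u with hs2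
    set s3 : (𝓞 M)ˣ := ρ (e.symm g3) u with hs3
    set N : (𝓞 M)ˣ := u * s1 * s2 * s3 with hNdef
    have hF1 : F 1 = x := by
      rw [hFdef]
      simp only [map_one, AlgEquiv.one_apply]
    have hNval : algebraMap (𝓞 M) M (N : 𝓞 M) = F 1 * F g1 * F g2 * F g3 := by
      rw [hNdef, Units.val_mul, Units.val_mul, Units.val_mul, map_mul, map_mul, map_mul,
        hs1, hs2, hs3, hval, hval, hval, hF1]
    have hN2 : N ^ 2 = 1 := aux_rat_value_torsion N q (by rw [hq, hNval])
    have hNH : N ∈ H := htorH N ⟨2, by norm_num, hN2⟩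
    have hcomb : (u * u) * N = (u * s1) * ((u * s2) * (u * s3)) := aux_comm u s1 s2 s3
    have hval2 : u * u = ((u * s1) * ((u * s2) * (u * s3))) * N⁻¹ := eq_mul_inv_of_mul_eq hcomb
    rw [hval2]
    refine Subgroup.mul_mem H ?_ (Subgroup.inv_mem H hNH)
    refine Subgroup.mul_mem H (hs1 ▸ hvH g1 (by decide) u) ?_
    exact Subgroup.mul_mem H (hs2 ▸ hvH g2 (by decide) u) (hs3 ▸ hvH g3 (by decide) u)
  -- torsion subgroup is in H
  have hTle : NumberField.Units.torsion M ≤ H := by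
    intro t ht
    rw [NumberField.Units.torsion, CommGroup.mem_torsion, isOfFinOrder_iff_pow_eq_one] at ht
    exact htorH t ht
  -- rank bound
  have hrle : NumberField.Units.rank M ≤ 3 := by
    have h1 := NumberField.InfinitePlace.card_add_two_mul_card_eq_rank M
    have h2 := NumberField.InfinitePlace.card_eq_nrRealPlaces_add_nrComplexPlaces M
    rw [hfr4] at h1
    rw [NumberField.Units.rank, h2]
    omega
  letI : Module ℤ (Additive ((𝓞 M)ˣ ⧸ NumberField.Units.torsion M)) :=
    AddCommGroup.toIntModule (Additive ((𝓞 M)ˣ ⧸ NumberField.Units.torsion M))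
  obtain ⟨hne, hdvd⟩ := aux_index_dvd H (NumberField.Units.torsion M) hsq hTle
    (NumberField.Units.rank M) (NumberField.Units.basisModTorsion M)
  refine ⟨hne, hdvd.trans ?_⟩
  calc (2 : ℕ) ^ NumberField.Units.rank M ∣ 2 ^ 3 := pow_dvd_pow 2 hrle
    _ = 8 := by norm_num
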